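/- For all reals δ, τ, ε > 0 and all integers q ≥ 3 and q' ≥ 1 there exists ε' > 0 (depending only on τ, ε, q, q') such that the following holds for every n ≥ q': if C ⊆ (Fin n → Bool) is a code with relative distance at least δ that has a q-query (τ, ε)-test-hypergraph H, then there exists a code C' ⊆ (Fin (2n) → Bool) of length 2n with |C'| = |C| (so its rate is half the rate of C), such that any two distinct codewords of C' differ in at least δ·n coordinates (relative distance at least δ/2), and C' has a (q+q')-query (τ, ε')-test-hypergraph H' with exactly |E(H)| · (n choose q') hyperedges. -/

import Mathlib

open Finset Real MeasureTheory ProbabilityTheory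

namespace LTCPaper

/-- A hyperedge over coordinates `Fin n`: a finite set `h` of coordinates together with a
constraint `f_h : (h → Bool) → Bool` on assignments to those coordinates. -/
abbrev Edge (n : ℕ) := Σ h : Finset (Fin n), ({v // v ∈ h} → Bool) → Bool

/-- `x` satisfies the hyperedge `e` if the constraint accepts the restriction of `x` to it. -/
def sat {n : ℕ} (x : Fin n → Bool) (e : Edge n) : Prop :=
  e.2 (fun v => x v.1) = true

instance {n : ℕ} (x : Fin n → Bool) (e : Edge n) : Decidable (sat x e) :=
  inferInstanceAs (Decidable (_ = true))

/-- Relative Hamming distance: fraction of coordinates on which `x` and `y` differ. -/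
noncomputable def relDist {n : ℕ} (x y : Fin n → Bool) : ℝ :=
  (hammingDist x y : ℝ) / n

/-- `x` has relative distance at least `τ` from the code `C`. -/
def farFrom {n : ℕ} (C : Set (Fin n → Bool)) (x : Fin n → Bool) (τ : ℝ) : Prop :=
  ∀ y ∈ C, τ ≤ relDist x y

/-- `C` has relative distance at least `δ`. -/
def hasDistance {n : ℕ} (C : Set (Fin n → Bool)) (δ : ℝ) : Prop :=
  ∀ x ∈ C, ∀ y ∈ C, x ≠ y → δ ≤ relDist x y

/-- `E` is a `(τ,ε)`-test-hypergraph for `C`: all codewords satisfy all hyperedges, and every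
word at relative distance at least `τ` from `C` falsifies at least an `ε` fraction of them. -/
def IsTestHypergraph {n : ℕ} (C : Set (Fin n → Bool)) (E : Finset (Edge n)) (τ ε : ℝ) : Prop :=
  (∀ x ∈ C, ∀ e ∈ E, sat x e) ∧
  (∀ x : Fin n → Bool, farFrom C x τ →
    ε * E.card ≤ ((E.filter fun e => ¬ sat x e).card : ℝ))

/-- A constraint is LOF ("last-one-fixed") if any two accepted assignments agreeing on all but
one coordinate agree on that coordinate as well. -/
def LOF {n : ℕ} (e : Edge n) : Prop :=
  ∀ a b : {v // v ∈ e.1} → Bool, e.2 a = true → e.2 b = true →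
    ∀ u : {v // v ∈ e.1}, (∀ v : {v // v ∈ e.1}, v ≠ u → a v = b v) → a u = b u


/-! ### Auxiliary constructions -/

def embFst (n : ℕ) : Fin n → Fin (2 * n) := fun i => ⟨i.1, by have := i.2; omega⟩

def embSnd (n : ℕ) : Fin n → Fin (2 * n) := fun i => ⟨n + i.1, by have := i.2; omega⟩

lemma embFst_injective (n : ℕ) : Function.Injective (embFst n) := by
  intro a b h; apply Fin.ext; simpa [embFst, Fin.ext_iff] using h

lemma embSnd_injective (n : ℕ) : Function.Injective (embSnd n) := by
  intro a b h; apply Fin.ext; simpa [embSnd, Fin.ext_iff] using h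

def pad {n : ℕ} (x : Fin n → Bool) : Fin (2 * n) → Bool :=
  fun j => if h : (j : ℕ) < n then x ⟨j, h⟩ else false

@[simp] lemma pad_embFst {n : ℕ} (x : Fin n → Bool) (i : Fin n) :
    pad x (embFst n i) = x i := by
  simp [pad, embFst, i.2]

@[simp] lemma pad_embSnd {n : ℕ} (x : Fin n → Bool) (i : Fin n) :
    pad x (embSnd n i) = false := by
  simp [pad, embSnd]

lemma pad_injective {n : ℕ} : Function.Injective (pad (n := n)) := by
  intro x y h
  funext i
  have := congrFun h (embFst n i)
  simpa using this

lemma mem_fst_union {n : ℕ} {A B : Finset (Fin n)} {i : Fin n} :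
    embFst n i ∈ A.image (embFst n) ∪ B.image (embSnd n) ↔ i ∈ A := by
  constructor
  · intro h
    rcases Finset.mem_union.1 h with h | h
    · rcases Finset.mem_image.1 h with ⟨a, ha, hai⟩
      rwa [embFst_injective n hai] at ha
    · rcases Finset.mem_image.1 h with ⟨b, hb, hbi⟩
      exfalso
      have : n + b.1 = i.1 := congrArg Fin.val hbi
      omega
  · intro h
    exact Finset.mem_union_left _ (Finset.mem_image_of_mem _ h)

lemma mem_snd_union {n : ℕ} {A B : Finset (Fin n)} {i : Fin n} :
    embSnd n i ∈ A.image (embFst n) ∪ B.image (embSnd n) ↔ i ∈ B := by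
  constructor
  · intro h
    rcases Finset.mem_union.1 h with h | h
    · rcases Finset.mem_image.1 h with ⟨a, ha, hai⟩
      exfalso
      have : a.1 = n + i.1 := congrArg Fin.val hai
      have := a.2; omega
    · rcases Finset.mem_image.1 h with ⟨b, hb, hbi⟩
      rwa [embSnd_injective n hbi] at hb
  · intro h
    exact Finset.mem_union_right _ (Finset.mem_image_of_mem _ h)

def bigEdge {n : ℕ} (e : Edge n) (S : Finset (Fin n)) : Edge (2 * n) :=
  ⟨e.1.image (embFst n) ∪ S.image (embSnd n),
   fun a =>
     (e.2 fun v => a ⟨embFst n v.1, mem_fst_union.2 v.2⟩) &&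
     decide (∀ v : Fin n, (h : v ∈ S) → a ⟨embSnd n v, mem_snd_union.2 h⟩ = false)⟩

lemma sat_bigEdge {n : ℕ} (e : Edge n) (S : Finset (Fin n)) (z : Fin (2 * n) → Bool) :
    sat z (bigEdge e S) ↔ sat (fun i => z (embFst n i)) e ∧ ∀ v ∈ S, z (embSnd n v) = false := by
  simp [sat, bigEdge, Bool.and_eq_true, decide_eq_true_iff]

lemma bigEdge_injective {n : ℕ} :
    Function.Injective (fun p : Edge n × Finset (Fin n) => bigEdge p.1 p.2) := by
  rintro ⟨⟨h1, f1⟩, S1⟩ ⟨⟨h2, f2⟩, S2⟩ heq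
  simp only at heq
  have hfst : h1.image (embFst n) ∪ S1.image (embSnd n)
      = h2.image (embFst n) ∪ S2.image (embSnd n) := congrArg Sigma.fst heq
  have hh : h1 = h2 := by
    ext i; rw [← mem_fst_union (B := S1), hfst, mem_fst_union]
  have hS : S1 = S2 := by
    ext i; rw [← mem_snd_union (A := h1), hfst, mem_snd_union]
  subst hh; subst hS
  have hfun := eq_of_heq (Sigma.mk.inj_iff.1 heq).2
  have hf : f1 = f2 := by
    funext b
    -- build a full assignment extending b by false on the second half
    set U := h1.image (embFst n) ∪ S1.image (embSnd n) with hU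
    have key : ∀ u : {v // v ∈ U}, ∀ hu : (u.1 : ℕ) < n, (⟨u.1.1, hu⟩ : Fin n) ∈ h1 := by
      intro u hu
      rcases Finset.mem_union.1 u.2 with h | h
      · rcases Finset.mem_image.1 h with ⟨a, ha, hai⟩
        have hv : a.1 = u.1.1 := congrArg Fin.val hai
        have : a = ⟨u.1.1, hu⟩ := Fin.ext hv
        rwa [this] at ha
      · rcases Finset.mem_image.1 h with ⟨a, ha, hai⟩
        exfalso
        have : n + a.1 = u.1.1 := congrArg Fin.val hai
        omega
    classical
    let a : {v // v ∈ U} → Bool := fun u =>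
      if hu : (u.1 : ℕ) < n then b ⟨⟨u.1.1, hu⟩, key u hu⟩ else false
    have ha1 : (fun v : {v // v ∈ h1} => a ⟨embFst n v.1, mem_fst_union.2 v.2⟩) = b := by
      funext v
      have hlt : ((embFst n v.1 : Fin (2*n)) : ℕ) < n := v.1.2
      simp only [a, dif_pos hlt]
      exact congrArg b (Subtype.ext (Fin.ext rfl))
    have h2' : decide (∀ v : Fin n, (h : v ∈ S1) → a ⟨embSnd n v, mem_snd_union.2 h⟩ = false)
        = true := by
      rw [decide_eq_true_iff]
      intro v hv
      have hnot : ¬ ((embSnd n v : Fin (2*n)) : ℕ) < n := by simp [embSnd]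
      simp only [a, dif_neg hnot]
    have hthis := congrFun hfun a
    rw [ha1, h2', Bool.and_true, Bool.and_true] at hthis
    exact hthis
  subst hf
  rfl

lemma hamming_le_pad {n : ℕ} (x y : Fin n → Bool) :
    hammingDist x y ≤ hammingDist (pad x) (pad y) := by
  unfold hammingDist
  apply Finset.card_le_card_of_injOn (embFst n)
  · intro i hi
    simp only [Finset.mem_filter, Finset.mem_univ, true_and] at hi ⊢
    simpa using hi
  · exact (embFst_injective n).injOn

lemma hamming_pad_le {n : ℕ} (z : Fin (2 * n) → Bool) (x' : Fin n → Bool) :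
    hammingDist z (pad x') ≤ hammingDist (fun i => z (embFst n i)) x'
      + ((Finset.univ.filter fun i => z (embSnd n i) = true)).card := by
  unfold hammingDist
  have hsub : (Finset.univ.filter fun j => z j ≠ pad x' j) ⊆
      ((Finset.univ.filter fun i => (fun i => z (embFst n i)) i ≠ x' i).image (embFst n)) ∪
      ((Finset.univ.filter fun i => z (embSnd n i) = true).image (embSnd n)) := by
    intro j hj
    simp only [Finset.mem_filter, Finset.mem_univ, true_and] at hj
    by_cases h : (j : ℕ) < n
    · apply Finset.mem_union_left
      refine Finset.mem_image.2 ⟨⟨j.1, h⟩, ?_, Fin.ext rfl⟩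
      simp only [Finset.mem_filter, Finset.mem_univ, true_and]
      have hj' : embFst n ⟨j.1, h⟩ = j := Fin.ext rfl
      rw [hj']
      have hp : pad x' j = x' ⟨j.1, h⟩ := by simp [pad, h]
      rw [← hp]; exact hj
    · have hn : (j : ℕ) - n < n := by have := j.2; omega
      apply Finset.mem_union_right
      have hj' : embSnd n ⟨(j : ℕ) - n, hn⟩ = j := Fin.ext (by simp [embSnd]; omega)
      refine Finset.mem_image.2 ⟨⟨(j : ℕ) - n, hn⟩, ?_, hj'⟩
      simp only [Finset.mem_filter, Finset.mem_univ, true_and]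
      rw [hj']
      have hp : pad x' j = false := by simp [pad, h]
      rw [hp] at hj
      simpa using hj
  calc (Finset.univ.filter fun j => z j ≠ pad x' j).card
      ≤ _ := Finset.card_le_card hsub
    _ ≤ _ + _ := Finset.card_union_le _ _
    _ ≤ _ := add_le_add Finset.card_image_le Finset.card_image_le

lemma choose_mul_le {k n q' : ℕ} (hk : k ≤ n) (hq : 1 ≤ q') :
    n * k.choose q' ≤ k * n.choose q' := by
  rcases Nat.eq_zero_or_pos k with hk0 | hk0
  · subst hk0
    simp [Nat.choose_eq_zero_of_lt hq]
  obtain ⟨k', rfl⟩ : ∃ k'', k = k'' + 1 := ⟨k - 1, by omega⟩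
  obtain ⟨r, rfl⟩ : ∃ r, q' = r + 1 := ⟨q' - 1, by omega⟩
  obtain ⟨n', rfl⟩ : ∃ n'', n = n'' + 1 := ⟨n - 1, by omega⟩
  have h1 := Nat.add_one_mul_choose_eq k' r
  have h2 := Nat.add_one_mul_choose_eq n' r
  have h3 : k'.choose r ≤ n'.choose r := Nat.choose_le_choose r (by omega)
  apply Nat.le_of_mul_le_mul_right _ (show 0 < r + 1 by omega)
  calc (n' + 1) * (k' + 1).choose (r + 1) * (r + 1)
      = (n' + 1) * ((k' + 1).choose (r + 1) * (r + 1)) := by ring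
    _ = (n' + 1) * ((k' + 1) * k'.choose r) := by rw [← h1]
    _ ≤ (n' + 1) * ((k' + 1) * n'.choose r) :=
        Nat.mul_le_mul_left _ (Nat.mul_le_mul_left _ h3)
    _ = (k' + 1) * ((n' + 1) * n'.choose r) := by ring
    _ = (k' + 1) * ((n' + 1).choose (r + 1) * (r + 1)) := by rw [h2]
    _ = (k' + 1) * (n' + 1).choose (r + 1) * (r + 1) := by ring

lemma miss_card {n q' : ℕ} (supp : Finset (Fin n)) :
    ((Finset.powersetCard q' (Finset.univ : Finset (Fin n))).filter
      (fun S => ∀ v ∈ S, v ∉ supp)).card = (n - supp.card).choose q' := by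
  classical
  have heq : (Finset.powersetCard q' (Finset.univ : Finset (Fin n))).filter
      (fun S => ∀ v ∈ S, v ∉ supp) = Finset.powersetCard q' suppᶜ := by
    ext S
    simp only [Finset.mem_filter, Finset.mem_powersetCard, Finset.subset_iff,
      Finset.mem_compl, Finset.mem_univ, true_implies]
    tauto
  rw [heq, Finset.card_powersetCard, Finset.card_compl]
  simp


/-- **Lemma (padding increases the number of queries and hyperedges).** From a `q`-query
`(τ,ε)`-LTC of length `n ≥ q'` and relative distance at least `δ` one gets a `(q+q')`-query code
of length `2n`, equal cardinality (hence half the rate), relative distance at least `δ/2`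
(distinct codewords differ in at least `δ·n` coordinates), with a `(τ,ε')`-test-hypergraph having
exactly `|E|·(n choose q')` hyperedges, where `ε' > 0` depends only on `τ, ε, q, q'`. -/
theorem padding_lemma (τ ε : ℝ) (hτ : 0 < τ) (hε : 0 < ε)
    (q q' : ℕ) (hq : 3 ≤ q) (hq' : 1 ≤ q') :
    ∃ ε' : ℝ, 0 < ε' ∧
      ∀ (δ : ℝ), 0 < δ → ∀ n : ℕ, q' ≤ n →
        ∀ (C : Set (Fin n → Bool)) (E : Finset (Edge n)),
          hasDistance C δ →
          (∀ e ∈ E, e.1.card ≤ q) →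
          IsTestHypergraph C E τ ε →
          ∃ (C' : Set (Fin (2 * n) → Bool)) (E' : Finset (Edge (2 * n))),
            C'.ncard = C.ncard ∧
            (∀ x ∈ C', ∀ y ∈ C', x ≠ y → δ * n ≤ (hammingDist x y : ℝ)) ∧
            (∀ e ∈ E', e.1.card ≤ q + q') ∧
            IsTestHypergraph C' E' τ ε' ∧
            E'.card = E.card * n.choose q' := by
  classical
  refine ⟨min ε τ, lt_min hε hτ, ?_⟩
  intro δ hδ n hn C E hdist hcard htest
  obtain ⟨hcomp, hsound⟩ := htest
  have hn0 : 0 < n := lt_of_lt_of_le hq' hn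
  have hn0' : (0 : ℝ) < n := by exact_mod_cast hn0
  set P : Finset (Finset (Fin n)) := Finset.powersetCard q' Finset.univ with hP
  have hPcard : P.card = n.choose q' := by
    rw [hP, Finset.card_powersetCard, Finset.card_univ, Fintype.card_fin]
  set E' : Finset (Edge (2 * n)) :=
    (E ×ˢ P).image (fun p => bigEdge p.1 p.2) with hE'
  have hE'card : E'.card = E.card * P.card := by
    rw [hE', Finset.card_image_of_injective _ bigEdge_injective, Finset.card_product]
  refine ⟨pad '' C, E', Set.ncard_image_of_injective C pad_injective, ?_, ?_, ⟨?_, ?_⟩, ?_⟩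
  · -- distance
    rintro x' ⟨x, hx, rfl⟩ y' ⟨y, hy, rfl⟩ hne
    have hxy : x ≠ y := fun h => hne (by rw [h])
    have h1 : δ ≤ (hammingDist x y : ℝ) / n := hdist x hx y hy hxy
    have h2 : δ * n ≤ (hammingDist x y : ℝ) := (le_div_iff₀ hn0').1 h1
    have h3 : (hammingDist x y : ℝ) ≤ hammingDist (pad x) (pad y) := by
      exact_mod_cast hamming_le_pad x y
    linarith
  · -- query bound
    intro e' he'
    obtain ⟨⟨e, S⟩, hmem, rfl⟩ := Finset.mem_image.1 he'
    rw [Finset.mem_product] at hmem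
    have hS : S.card = q' := (Finset.mem_powersetCard.1 hmem.2).2
    calc (bigEdge e S).1.card
        ≤ (e.1.image (embFst n)).card + (S.image (embSnd n)).card :=
          Finset.card_union_le _ _
      _ ≤ e.1.card + S.card := add_le_add Finset.card_image_le Finset.card_image_le
      _ ≤ q + q' := by rw [hS]; exact add_le_add_left (hcard e hmem.1) q'
  · -- completeness
    rintro x' ⟨x, hx, rfl⟩ e' he'
    obtain ⟨⟨e, S⟩, hmem, rfl⟩ := Finset.mem_image.1 he'
    rw [Finset.mem_product] at hmem
    rw [sat_bigEdge]
    constructor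
    · rw [show (fun i => pad x (embFst n i)) = x from funext (pad_embFst x)]
      exact hcomp x hx e hmem.1
    · intro v _
      exact pad_embSnd x v
  · -- soundness
    intro z hz
    set x : Fin n → Bool := fun i => z (embFst n i) with hxdef
    set supp : Finset (Fin n) := Finset.univ.filter (fun i => z (embSnd n i) = true)
      with hsuppdef
    set m := supp.card with hmdef
    have hmn : m ≤ n := by
      calc m ≤ (Finset.univ : Finset (Fin n)).card := Finset.card_filter_le _ _
        _ = n := by rw [Finset.card_univ, Fintype.card_fin]
    by_cases hcase : (m : ℝ) < τ * n
    · -- second half is light: x is far from C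
      have hfar : farFrom C x τ := by
        intro y hy
        have hzy := hz (pad y) (Set.mem_image_of_mem _ hy)
        rw [relDist] at hzy
        have h2n : (0 : ℝ) < ((2 * n : ℕ) : ℝ) := by
          have : (0:ℕ) < 2 * n := by omega
          exact_mod_cast this
        have h1 : τ * ((2 * n : ℕ) : ℝ) ≤ hammingDist z (pad y) := (le_div_iff₀ h2n).1 hzy
        have h2 : (hammingDist z (pad y) : ℝ) ≤ (hammingDist x y : ℝ) + m := by
          exact_mod_cast hamming_pad_le z y
        rw [relDist, le_div_iff₀ hn0']
        have hcast : ((2 * n : ℕ) : ℝ) = 2 * (n : ℝ) := by push_cast; ring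
        rw [hcast] at h1
        linarith
      have hF := hsound x hfar
      set F := E.filter (fun e => ¬ sat x e) with hFdef
      have himg : (F ×ˢ P).image (fun p => bigEdge p.1 p.2) ⊆
          E'.filter (fun e => ¬ sat z e) := by
        intro e' he'
        obtain ⟨⟨e, S⟩, hmem, rfl⟩ := Finset.mem_image.1 he'
        rw [Finset.mem_product] at hmem
        obtain ⟨heF, hSP⟩ := hmem
        rw [Finset.mem_filter] at heF
        rw [Finset.mem_filter]
        refine ⟨Finset.mem_image_of_mem _ (Finset.mem_product.2 ⟨heF.1, hSP⟩), ?_⟩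
        intro hsat
        exact heF.2 ((sat_bigEdge e S z).1 hsat).1
      have hcount : F.card * P.card ≤ (E'.filter (fun e => ¬ sat z e)).card := by
        calc F.card * P.card = ((F ×ˢ P).image (fun p => bigEdge p.1 p.2)).card := by
              rw [Finset.card_image_of_injective _ bigEdge_injective, Finset.card_product]
          _ ≤ _ := Finset.card_le_card himg
      have hcount' : (F.card : ℝ) * P.card ≤ ((E'.filter (fun e => ¬ sat z e)).card : ℝ) := by
        exact_mod_cast hcount
      have hPnn : (0 : ℝ) ≤ (P.card : ℝ) := Nat.cast_nonneg _
      have hmin : min ε τ ≤ ε := min_le_left _ _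
      have hEnn : (0 : ℝ) ≤ (E.card : ℝ) := Nat.cast_nonneg _
      rw [hE'card]
      push_cast
      have h1 : (min ε τ) * ((E.card : ℝ) * P.card) ≤ ε * ((E.card : ℝ) * P.card) :=
        mul_le_mul_of_nonneg_right hmin (mul_nonneg hEnn hPnn)
      have h3 : (ε * (E.card : ℝ)) * P.card ≤ (F.card : ℝ) * P.card :=
        mul_le_mul_of_nonneg_right hF hPnn
      nlinarith
    · -- second half is heavy: padding constraints are violated
      push_neg at hcase
      set Hit : Finset (Finset (Fin n)) := P.filter (fun S => ¬ ∀ v ∈ S, v ∉ supp)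
        with hHitdef
      have himg : (E ×ˢ Hit).image (fun p => bigEdge p.1 p.2) ⊆
          E'.filter (fun e => ¬ sat z e) := by
        intro e' he'
        obtain ⟨⟨e, S⟩, hmem, rfl⟩ := Finset.mem_image.1 he'
        rw [Finset.mem_product] at hmem
        obtain ⟨heE, hSH⟩ := hmem
        rw [Finset.mem_filter] at hSH
        rw [Finset.mem_filter]
        refine ⟨Finset.mem_image_of_mem _ (Finset.mem_product.2 ⟨heE, hSH.1⟩), ?_⟩
        intro hsat
        apply hSH.2
        intro v hv hvsupp
        rw [hsuppdef, Finset.mem_filter] at hvsupp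
        have := ((sat_bigEdge e S z).1 hsat).2 v hv
        rw [this] at hvsupp
        exact Bool.false_ne_true hvsupp.2
      have hmissHit : (P.filter (fun S => ∀ v ∈ S, v ∉ supp)).card + Hit.card = P.card :=
        Finset.card_filter_add_card_filter_not _
      have hmiss : (P.filter (fun S => ∀ v ∈ S, v ∉ supp)).card = (n - m).choose q' :=
        miss_card supp
      have hchoose : n * (n - m).choose q' ≤ (n - m) * n.choose q' :=
        choose_mul_le (Nat.sub_le n m) hq'
      have hchoose' : (n : ℝ) * ((n - m).choose q' : ℝ) ≤ ((n : ℝ) - m) * (n.choose q' : ℝ) := by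
        have hc : ((n - m : ℕ) : ℝ) = (n : ℝ) - m := by
          rw [Nat.cast_sub hmn]
        calc (n : ℝ) * ((n - m).choose q' : ℝ) ≤ ((n - m : ℕ) : ℝ) * (n.choose q' : ℝ) := by
              exact_mod_cast hchoose
          _ = ((n : ℝ) - m) * (n.choose q' : ℝ) := by rw [hc]
      -- (n-m).choose q' ≤ (1 - τ) * n.choose q'
      have hmiss_le : ((n - m).choose q' : ℝ) ≤ (1 - τ) * (n.choose q' : ℝ) := by
        have hnc : (0 : ℝ) ≤ (n.choose q' : ℝ) := Nat.cast_nonneg _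
        nlinarith
      have hHit_ge : τ * (P.card : ℝ) ≤ (Hit.card : ℝ) := by
        have h1 : ((P.filter (fun S => ∀ v ∈ S, v ∉ supp)).card : ℝ) + (Hit.card : ℝ)
            = (P.card : ℝ) := by exact_mod_cast hmissHit
        rw [hmiss] at h1
        rw [hPcard] at h1 ⊢
        linarith
      have hcount : E.card * Hit.card ≤ (E'.filter (fun e => ¬ sat z e)).card := by
        calc E.card * Hit.card = ((E ×ˢ Hit).image (fun p => bigEdge p.1 p.2)).card := by
              rw [Finset.card_image_of_injective _ bigEdge_injective, Finset.card_product]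
          _ ≤ _ := Finset.card_le_card himg
      have hcount' : (E.card : ℝ) * Hit.card ≤ ((E'.filter (fun e => ¬ sat z e)).card : ℝ) := by
        exact_mod_cast hcount
      have hmin : min ε τ ≤ τ := min_le_right _ _
      have hEnn : (0 : ℝ) ≤ (E.card : ℝ) := Nat.cast_nonneg _
      have hPnn : (0 : ℝ) ≤ (P.card : ℝ) := Nat.cast_nonneg _
      rw [hE'card]
      push_cast
      have h1 : (min ε τ) * ((E.card : ℝ) * P.card) ≤ τ * ((E.card : ℝ) * P.card) :=
        mul_le_mul_of_nonneg_right hmin (mul_nonneg hEnn hPnn)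
      have h3 : (E.card : ℝ) * (τ * P.card) ≤ (E.card : ℝ) * Hit.card :=
        mul_le_mul_of_nonneg_left hHit_ge hEnn
      nlinarith
  · rw [hE'card, hPcard]


end LTCPaper
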